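/- If CPC proves φ(p,r) → ψ(p,s) and ψ(p,s) is monotone in the variables p, then IPC proves ⋀ᵢ(pᵢ ∨ qᵢ) → (¬φ(¬p, r) ∨ ¬¬ψ(q, s)), where ¬p denotes the tuple of negated variables ¬p₁,…,¬p_m and q = q₁,…,q_m are fresh variables. -/

import Mathlib

/-! ## Basic machinery: strings, polynomial time, NP, circuits, formulas -/

/-- The trivial finite encoding of binary strings over the alphabet `Bool`. -/
def listBoolEncoding : Computability.Encoding (List Bool) Bool where
  encode := id
  decode := fun l => some l
  decode_encode := fun _ => rfl

/-- A function on binary strings is polynomial-time computable if some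
two-stack Turing machine computes it in polynomial time. -/
def PolyTimeComputable (f : List Bool → List Bool) : Prop :=
  Nonempty (Turing.TM2ComputableInPolyTime listBoolEncoding.encode listBoolEncoding.encode f)

/-- An injective pairing of binary strings. -/
def pairEnc (u w : List Bool) : List Bool :=
  (u.map fun b => [true, b]).flatten ++ false :: w

/-- A predicate on binary strings is polynomial-time decidable. -/
def PolyTimeDecidable (P : List Bool → Prop) : Prop :=
  ∃ f, PolyTimeComputable f ∧ ∀ w, P w ↔ f w = [true]

/-- A binary predicate on binary strings is polynomial-time decidable. -/
def PolyTimeDecidable2 (P : List Bool → List Bool → Prop) : Prop :=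
  ∃ f, PolyTimeComputable f ∧ ∀ u w, P u w ↔ f (pairEnc u w) = [true]

/-- `L ∈ NP`: there are a polynomial-time decidable binary predicate `R` and a
polynomial `p` with `w ∈ L` iff some witness `u` with `|u| ≤ p (|w|)` satisfies `R u w`. -/
def InNP (L : Set (List Bool)) : Prop :=
  ∃ (R : List Bool → List Bool → Prop) (p : Polynomial ℕ),
    PolyTimeDecidable2 R ∧ ∀ w, w ∈ L ↔ ∃ u, u.length ≤ p.eval w.length ∧ R u w

/-- `L ∈ P`. -/
def InP (L : Set (List Bool)) : Prop := PolyTimeDecidable (· ∈ L)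

/-- A gate of a Boolean circuit with `s` gates: a constant, an input gate reading
input variable `a : ℕ`, or a negation/conjunction/disjunction of earlier gates. -/
inductive CGate (s : ℕ) : Type where
  | const : Bool → CGate s
  | input : ℕ → CGate s
  | not : Fin s → CGate s
  | and : Fin s → Fin s → CGate s
  | or : Fin s → Fin s → CGate s

/-- The gates referenced by a gate. -/
def CGate.deps {s : ℕ} : CGate s → List (Fin s)
  | .const _ => []
  | .input _ => []
  | .not j => [j]
  | .and j k => [j, k]
  | .or j k => [j, k]

/-- A Boolean circuit (as a DAG of gates, without a chosen output). -/
structure CircuitBase where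
  size : ℕ
  gates : Fin size → CGate size
  wf : ∀ i : Fin size, ∀ j ∈ (gates i).deps, (j : ℕ) < (i : ℕ)

/-- Evaluate gate `i` of a circuit under an assignment `v` to the input variables. -/
def CircuitBase.evalGate (c : CircuitBase) (v : ℕ → Bool) (i : Fin c.size) : Bool :=
  match h : c.gates i with
  | .const b => b
  | .input a => v a
  | .not j => !(c.evalGate v j)
  | .and j k => c.evalGate v j && c.evalGate v k
  | .or j k => c.evalGate v j || c.evalGate v k
termination_by (i : ℕ)
decreasing_by
  · exact c.wf i j (by rw [h]; simp [CGate.deps])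
  · exact c.wf i j (by rw [h]; simp [CGate.deps])
  · exact c.wf i k (by rw [h]; simp [CGate.deps])
  · exact c.wf i j (by rw [h]; simp [CGate.deps])
  · exact c.wf i k (by rw [h]; simp [CGate.deps])

/-- The circuit reads only input variables from `S`. -/
def CircuitBase.InputsIn (c : CircuitBase) (S : Set ℕ) : Prop :=
  ∀ (i : Fin c.size) (a : ℕ), c.gates i = CGate.input a → a ∈ S

/-- A monotone circuit: no negation gates. -/
def CircuitBase.MonotoneC (c : CircuitBase) : Prop :=
  ∀ (i j : Fin c.size), c.gates i ≠ CGate.not j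

/-- A single-output Boolean circuit. -/
structure Circuit extends CircuitBase where
  out : Fin size

/-- Evaluate a circuit on an assignment to the input variables. -/
def Circuit.eval (c : Circuit) (v : ℕ → Bool) : Bool :=
  c.toCircuitBase.evalGate v c.out

/-- A multi-output Boolean circuit. -/
structure MultiCircuit extends CircuitBase where
  outs : List (Fin size)

/-- Evaluate a multi-output circuit on an assignment to the input variables. -/
def MultiCircuit.eval (c : MultiCircuit) (v : ℕ → Bool) : List Bool :=
  c.outs.map (c.toCircuitBase.evalGate v)

/-- `pad_m(w) = 1w₁1w₂…1w_l 0…0` of total length `2m`. -/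
def padBits (m : ℕ) (w : List Bool) : List Bool :=
  (w.map fun b => [true, b]).flatten ++ List.replicate (2 * m - 2 * w.length) false

/-- A function on binary strings is computable by polynomial-size circuits:
a family `Cₙ` of multi-output circuits of size polynomial in `n`, where
`Cₙ` reads input bits `0,…,n-1` and outputs the padded value of `f` on
every input of length `n`. -/
def PolySizeComputable (f : List Bool → List Bool) : Prop :=
  ∃ (C : ℕ → MultiCircuit) (outLen : ℕ → ℕ) (p : Polynomial ℕ),
    ∀ n, (C n).size ≤ p.eval n ∧ (C n).toCircuitBase.InputsIn {a | a < n} ∧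
      ∀ w : List Bool, w.length = n →
        (f w).length ≤ outLen n ∧
        (C n).eval (fun a => w.getD a false) = padBits (outLen n) (f w)

/-- `L ∈ P/poly`: a polynomial-size circuit family decides membership in `L`. -/
def InPPoly (L : Set (List Bool)) : Prop :=
  ∃ (C : ℕ → Circuit) (p : Polynomial ℕ),
    ∀ n, (C n).size ≤ p.eval n ∧ (C n).toCircuitBase.InputsIn {a | a < n} ∧
      ∀ w : List Bool, w.length = n →
        (w ∈ L ↔ (C n).eval (fun a => w.getD a false) = true)

/-- A proof system for a language `L`: a polynomial-time decidable binary relation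
`Pr` such that `w ∈ L` iff `w` has a `Pr`-proof. -/
def IsProofSystem (Pr : List Bool → List Bool → Prop) (L : Set (List Bool)) : Prop :=
  PolyTimeDecidable2 Pr ∧ ∀ w, w ∈ L ↔ ∃ u, Pr u w

/-- A proof system is polynomially bounded if every member of `L` has a proof of
size polynomial in its length. -/
def PolyBounded (Pr : List Bool → List Bool → Prop) (L : Set (List Bool)) : Prop :=
  ∃ p : Polynomial ℕ, ∀ w ∈ L, ∃ u, Pr u w ∧ u.length ≤ p.eval w.length

/-- One-way protocols. -/
structure OneWayProtocol where
  /-- the polynomial-time decidable predicate of source data -/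
  Pred : List Bool → Prop
  /-- the public transformation -/
  h : List Bool → List Bool
  /-- the derived secret information -/
  k : List Bool → List Bool
  /-- computes (in unary) the length of `k u` from `h u` -/
  lenFun : List Bool → List Bool
  /-- the bounding polynomial -/
  bnd : Polynomial ℕ
  pred_dec : PolyTimeDecidable Pred
  h_poly : PolyTimeComputable h
  k_poly : PolyTimeComputable k
  lenFun_poly : PolyTimeComputable lenFun
  /-- semi-injectivity -/
  semi_inj : ∀ u₁ u₂, Pred u₁ → Pred u₂ → h u₁ = h u₂ → k u₁ = k u₂
  /-- `|k u|` is polynomial-time computable from `h u` -/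
  len_eq : ∀ u, (k u).length = (lenFun (h u)).length
  /-- boundedness: `|u| ≤ bnd (|h u|)` -/
  bounded : ∀ u, u.length ≤ bnd.eval (h u).length
  /-- security against `P/poly` adversaries -/
  secure : ¬ ∃ f : List Bool → List Bool, PolySizeComputable f ∧ ∀ u, k u = f (h u)

/-! ## Propositional formulas -/

/-- Propositional formulas over `{⊤, ⊥, ∧, ∨, →}` with variables indexed by `ℕ`. -/
inductive PropForm : Type where
  | tr : PropForm
  | fls : PropForm
  | var : ℕ → PropForm
  | and : PropForm → PropForm → PropForm
  | or : PropForm → PropForm → PropForm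
  | imp : PropForm → PropForm → PropForm
deriving DecidableEq

/-- Negation abbreviates `φ → ⊥`. -/
def PropForm.neg (φ : PropForm) : PropForm := φ.imp .fls

/-- Classical Boolean evaluation of a formula. -/
def PropForm.eval (v : ℕ → Bool) : PropForm → Bool
  | .tr => true
  | .fls => false
  | .var a => v a
  | .and φ ψ => φ.eval v && ψ.eval v
  | .or φ ψ => φ.eval v || ψ.eval v
  | .imp φ ψ => !(φ.eval v) || ψ.eval v

/-- A classical tautology. -/
def PropForm.Taut (φ : PropForm) : Prop := ∀ v, φ.eval v = true

/-- The variables occurring in a formula. -/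
def PropForm.vars : PropForm → Finset ℕ
  | .tr => ∅
  | .fls => ∅
  | .var a => {a}
  | .and φ ψ => φ.vars ∪ ψ.vars
  | .or φ ψ => φ.vars ∪ ψ.vars
  | .imp φ ψ => φ.vars ∪ ψ.vars

/-- The size of a formula. -/
def PropForm.size : PropForm → ℕ
  | .tr => 1
  | .fls => 1
  | .var _ => 1
  | .and φ ψ => φ.size + ψ.size + 1
  | .or φ ψ => φ.size + ψ.size + 1
  | .imp φ ψ => φ.size + ψ.size + 1

/-- Substitution of formulas for variables. -/
def PropForm.subst (σ : ℕ → PropForm) : PropForm → PropForm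
  | .tr => .tr
  | .fls => .fls
  | .var a => σ a
  | .and φ ψ => .and (φ.subst σ) (ψ.subst σ)
  | .or φ ψ => .or (φ.subst σ) (ψ.subst σ)
  | .imp φ ψ => .imp (φ.subst σ) (ψ.subst σ)

/-- A monotone formula: built from atoms, `⊤`, `⊥`, `∧`, `∨` only (no implication). -/
def PropForm.IsMonotone : PropForm → Prop
  | .tr => True
  | .fls => True
  | .var _ => True
  | .and φ ψ => φ.IsMonotone ∧ ψ.IsMonotone
  | .or φ ψ => φ.IsMonotone ∧ ψ.IsMonotone
  | .imp _ _ => False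

/-- `MonoIn P b φ` holds if every occurrence in `φ` of a variable from `P` has
polarity allowed by `b` (`b = true`: positive occurrences only are constrained;
a variable of `P` may occur with polarity `b` but not opposite).
`MonoIn P true φ` says `φ` is monotone in the variables of `P`
(no negated occurrence of a `P`-variable in negation normal form). -/
def MonoIn (P : Finset ℕ) : Bool → PropForm → Prop
  | _, .tr => True
  | _, .fls => True
  | b, .var a => b = true ∨ a ∉ P
  | b, .and φ ψ => MonoIn P b φ ∧ MonoIn P b ψ
  | b, .or φ ψ => MonoIn P b φ ∧ MonoIn P b ψ
  | b, .imp φ ψ => MonoIn P (!b) φ ∧ MonoIn P b ψ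

/-- Conjunction of a list of formulas. -/
def conjList (Γ : List PropForm) : PropForm := Γ.foldr PropForm.and .tr

/-- Disjunction of a list of formulas. -/
def disjList (Δ : List PropForm) : PropForm := Δ.foldr PropForm.or .fls

/-- `⋀_{i<m} (pᵢ ∨ ¬pᵢ)`. -/
def excludedMiddleConj (m : ℕ) : PropForm :=
  conjList ((List.range m).map fun i => (PropForm.var i).or (PropForm.var i).neg)

/-- Hilbert-style provability in intuitionistic propositional logic `IPC`. -/
inductive IPC : PropForm → Prop
  | mp {φ ψ : PropForm} : IPC (φ.imp ψ) → IPC φ → IPC ψ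
  | ax1 (φ ψ : PropForm) : IPC (φ.imp (ψ.imp φ))
  | ax2 (φ ψ χ : PropForm) : IPC ((φ.imp (ψ.imp χ)).imp ((φ.imp ψ).imp (φ.imp χ)))
  | axAndI (φ ψ : PropForm) : IPC (φ.imp (ψ.imp (φ.and ψ)))
  | axAndL (φ ψ : PropForm) : IPC ((φ.and ψ).imp φ)
  | axAndR (φ ψ : PropForm) : IPC ((φ.and ψ).imp ψ)
  | axOrL (φ ψ : PropForm) : IPC (φ.imp (φ.or ψ))
  | axOrR (φ ψ : PropForm) : IPC (ψ.imp (φ.or ψ))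
  | axOrE (φ ψ χ : PropForm) : IPC ((φ.imp χ).imp ((ψ.imp χ).imp ((φ.or ψ).imp χ)))
  | axFls (φ : PropForm) : IPC (PropForm.fls.imp φ)
  | axTr : IPC .tr

/-- Unary encoding of a natural number as a binary string. -/
def natBits (n : ℕ) : List Bool := List.replicate n true ++ [false]

/-- An encoding of propositional formulas as binary strings. -/
def PropForm.encode : PropForm → List Bool
  | .tr => [false, false, false]
  | .fls => [false, false, true]
  | .var a => [false, true] ++ natBits a
  | .and φ ψ => [true, false, false] ++ φ.encode ++ ψ.encode
  | .or φ ψ => [true, false, true] ++ φ.encode ++ ψ.encode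
  | .imp φ ψ => [true, true] ++ φ.encode ++ ψ.encode

/-- The language of (codes of) classical propositional tautologies. -/
def CPClang : Set (List Bool) := {w | ∃ φ : PropForm, φ.Taut ∧ w = φ.encode}

/-- The formula computed by a circuit (unfolding the DAG into a tree). -/
def CircuitBase.gateForm (c : CircuitBase) (i : Fin c.size) : PropForm :=
  match h : c.gates i with
  | .const b => if b then .tr else .fls
  | .input a => .var a
  | .not j => (c.gateForm j).neg
  | .and j k => (c.gateForm j).and (c.gateForm k)
  | .or j k => (c.gateForm j).or (c.gateForm k)
termination_by (i : ℕ)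
decreasing_by
  · exact c.wf i j (by rw [h]; simp [CGate.deps])
  · exact c.wf i j (by rw [h]; simp [CGate.deps])
  · exact c.wf i k (by rw [h]; simp [CGate.deps])
  · exact c.wf i j (by rw [h]; simp [CGate.deps])
  · exact c.wf i k (by rw [h]; simp [CGate.deps])

/-- The formula `[C]` of a single-output circuit `C`. -/
def Circuit.toForm (c : Circuit) : PropForm := c.toCircuitBase.gateForm c.out

/-- `[C]` is a Craig interpolant for `φ → ψ`: `C` reads only the shared
variables, and for every assignment `v`, `φ(v) = 1` implies `C(v) = 1`, and
`C(v) = 1` implies `ψ(v) = 1`. -/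
def Interpolates (C : Circuit) (φ ψ : PropForm) : Prop :=
  C.toCircuitBase.InputsIn {a | a ∈ φ.vars ∩ ψ.vars} ∧
  ∀ v : ℕ → Bool, (φ.eval v = true → C.eval v = true) ∧ (C.eval v = true → ψ.eval v = true)

/-- Feasible interpolation of a proof system for `CPC`: from any proof of an
implication one obtains an interpolating circuit of polynomial size. -/
def FeasibleInterpolation (Pr : List Bool → List Bool → Prop) : Prop :=
  ∃ s : Polynomial ℕ, ∀ (φ ψ : PropForm) (u : List Bool),
    Pr u (φ.imp ψ).encode →
    ∃ C : Circuit,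
      C.size ≤ s.eval (u.length + (φ.imp ψ).encode.length) ∧ Interpolates C φ ψ

/-! ## Horn formulas -/

/-- A conjunction of atoms. -/
inductive AtomConj : PropForm → Prop
  | var (a : ℕ) : AtomConj (.var a)
  | and {φ ψ : PropForm} : AtomConj φ → AtomConj ψ → AtomConj (φ.and ψ)

/-- An implicational Horn formula: an atom, or `(p₁ ∧ … ∧ p_k) → r` with all
`pᵢ` and `r` atoms. -/
inductive IsHorn : PropForm → Prop
  | atom (a : ℕ) : IsHorn (.var a)
  | imp {φ : PropForm} (r : ℕ) : AtomConj φ → IsHorn (φ.imp (.var r))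

/-! ## Modal formulas -/

/-- Modal propositional formulas. -/
inductive ModalForm : Type where
  | tr : ModalForm
  | fls : ModalForm
  | var : ℕ → ModalForm
  | and : ModalForm → ModalForm → ModalForm
  | or : ModalForm → ModalForm → ModalForm
  | imp : ModalForm → ModalForm → ModalForm
  | box : ModalForm → ModalForm
deriving DecidableEq

/-- Modal negation. -/
def ModalForm.neg (φ : ModalForm) : ModalForm := φ.imp .fls

/-- Substitution for modal formulas. -/
def ModalForm.subst (σ : ℕ → ModalForm) : ModalForm → ModalForm
  | .tr => .tr
  | .fls => .fls
  | .var a => σ a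
  | .and φ ψ => .and (φ.subst σ) (ψ.subst σ)
  | .or φ ψ => .or (φ.subst σ) (ψ.subst σ)
  | .imp φ ψ => .imp (φ.subst σ) (ψ.subst σ)
  | .box φ => .box (φ.subst σ)

/-- The forgetful translation (`□φ ↦ φ`). -/
def ModalForm.forget : ModalForm → PropForm
  | .tr => .tr
  | .fls => .fls
  | .var a => .var a
  | .and φ ψ => .and φ.forget ψ.forget
  | .or φ ψ => .or φ.forget ψ.forget
  | .imp φ ψ => .imp φ.forget ψ.forget
  | .box φ => φ.forget

/-- The collapse translation (`□φ ↦ ⊤`). -/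
def ModalForm.collapse : ModalForm → PropForm
  | .tr => .tr
  | .fls => .fls
  | .var a => .var a
  | .and φ ψ => .and φ.collapse ψ.collapse
  | .or φ ψ => .or φ.collapse ψ.collapse
  | .imp φ ψ => .imp φ.collapse ψ.collapse
  | .box _ => .tr

/-- Hilbert-style provability in the normal modal logic `K` extended by the
axioms in `Ax` (closed under substitution): a classical propositional base,
the distribution axiom, modus ponens, necessitation and substitution. -/
inductive KExt (Ax : Set ModalForm) : ModalForm → Prop
  | axiom' {φ : ModalForm} : φ ∈ Ax → KExt Ax φ
  | mp {φ ψ : ModalForm} : KExt Ax (φ.imp ψ) → KExt Ax φ → KExt Ax ψ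
  | nec {φ : ModalForm} : KExt Ax φ → KExt Ax φ.box
  | subst {φ : ModalForm} (σ : ℕ → ModalForm) : KExt Ax φ → KExt Ax (φ.subst σ)
  | ax1 (φ ψ : ModalForm) : KExt Ax (φ.imp (ψ.imp φ))
  | ax2 (φ ψ χ : ModalForm) : KExt Ax ((φ.imp (ψ.imp χ)).imp ((φ.imp ψ).imp (φ.imp χ)))
  | axAndI (φ ψ : ModalForm) : KExt Ax (φ.imp (ψ.imp (φ.and ψ)))
  | axAndL (φ ψ : ModalForm) : KExt Ax ((φ.and ψ).imp φ)
  | axAndR (φ ψ : ModalForm) : KExt Ax ((φ.and ψ).imp ψ)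
  | axOrL (φ ψ : ModalForm) : KExt Ax (φ.imp (φ.or ψ))
  | axOrR (φ ψ : ModalForm) : KExt Ax (ψ.imp (φ.or ψ))
  | axOrE (φ ψ χ : ModalForm) : KExt Ax ((φ.imp χ).imp ((ψ.imp χ).imp ((φ.or ψ).imp χ)))
  | axFls (φ : ModalForm) : KExt Ax (ModalForm.fls.imp φ)
  | axTr : KExt Ax .tr
  | axDNE (φ : ModalForm) : KExt Ax (φ.neg.neg.imp φ)
  | axK (φ ψ : ModalForm) : KExt Ax (((φ.imp ψ).box).imp (φ.box.imp ψ.box))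

/-- Provability in the basic modal logic `K`. -/
def KProof : ModalForm → Prop := KExt ∅

/-! ## Automatability -/

/-- A proof system for `CPC` is substitutable: substituting constants for some
of the variables transforms proofs with polynomial overhead. -/
def Substitutable (Pr : List Bool → List Bool → Prop) : Prop :=
  ∃ l : Polynomial ℕ, ∀ (φ : PropForm) (σ : ℕ → PropForm) (u : List Bool),
    (∀ a, σ a = .var a ∨ σ a = .tr ∨ σ a = .fls) →
    Pr u φ.encode →
    ∃ u', Pr u' (φ.subst σ).encode ∧ u'.length ≤ l.eval (u.length + φ.encode.length)

/-- Closure under variable-free modus ponens: from a proof of `φ → ψ` with `φ` a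
variable-free tautology one obtains a proof of `ψ` with polynomial overhead. -/
def ClosedUnderVarFreeMP (Pr : List Bool → List Bool → Prop) : Prop :=
  ∃ m : Polynomial ℕ, ∀ (φ ψ : PropForm) (u : List Bool),
    φ.vars = ∅ → φ.Taut → Pr u (φ.imp ψ).encode →
    ∃ u', Pr u' ψ.encode ∧ u'.length ≤ m.eval (u.length + (φ.imp ψ).encode.length)

/-- Automatability (padded formulation): a polynomial-time algorithm which, given a
formula `φ` together with (in unary) any bound `b` on the size of some `Pr`-proof of
`φ`, outputs a `Pr`-proof of `φ`; its running time is thus polynomial in `|φ|` and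
the size of the shortest proof of `φ`. -/
def Automatable (Pr : List Bool → List Bool → Prop) : Prop :=
  ∃ A : List Bool → List Bool, PolyTimeComputable A ∧
    ∀ (φ : PropForm) (b : ℕ),
      (∃ u, Pr u φ.encode ∧ u.length ≤ b) →
      Pr (A (pairEnc φ.encode (List.replicate b true))) φ.encode

/-! ## Frege systems -/

/-- An inference rule: finitely many premises and a conclusion. -/
structure FregeRule : Type where
  prems : List PropForm
  concl : PropForm

/-- `π` is a derivation from assumptions `Γ` in the inference system `F`: every
line is an assumption or follows from earlier lines by a substitution instance
of a rule of `F`. -/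
def IsDerivation (F : List FregeRule) (Γ : List PropForm) (π : List PropForm) : Prop :=
  ∀ (i : ℕ) (hi : i < π.length),
    π.get ⟨i, hi⟩ ∈ Γ ∨
    ∃ R ∈ F, ∃ σ : ℕ → PropForm,
      π.get ⟨i, hi⟩ = R.concl.subst σ ∧
      ∀ p ∈ R.prems, ∃ (j : ℕ) (hj : j < π.length), j < i ∧ π.get ⟨j, hj⟩ = p.subst σ

/-- `φ` is derivable from `Γ` in the inference system `F`. -/
def FregeProves (F : List FregeRule) (Γ : List PropForm) (φ : PropForm) : Prop :=
  ∃ π : List PropForm, IsDerivation F Γ π ∧ φ ∈ π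

/-- The size of a derivation: the total size of its formulas. -/
def derivSize (π : List PropForm) : ℕ := (π.map PropForm.size).sum

/-! ## Graphs encoded as binary strings -/

/-- Adjacency in the graph on `n` vertices encoded by a binary string of length
`n(n-1)/2` (the entry for the pair `{i, j}` with `i < j` is at position
`j(j-1)/2 + i`). -/
def adjOf (w : List Bool) (i j : ℕ) : Bool :=
  if i < j then w.getD (j * (j - 1) / 2 + i) false
  else if j < i then w.getD (i * (i - 1) / 2 + j) false
  else false

/-- The graph encoded by `w` (on `n` vertices) contains a `k`-clique. -/
def HasClique (w : List Bool) (n k : ℕ) : Prop :=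
  ∃ f : Fin k → Fin n, Function.Injective f ∧
    ∀ a b : Fin k, a ≠ b → adjOf w (f a) (f b) = true

/-- The graph encoded by `w` (on `n` vertices) has a proper `l`-coloring. -/
def HasColoring (w : List Bool) (n l : ℕ) : Prop :=
  ∃ c : Fin n → Fin l, ∀ i j : Fin n, adjOf w (i : ℕ) (j : ℕ) = true → c i ≠ c j

/-- The language of graphs (on `n ≥ n₀` vertices) containing a `K(n)`-clique. -/
def CliqueLang (n₀ : ℕ) (K : ℕ → ℕ) : Set (List Bool) :=
  {w | ∃ n, n₀ ≤ n ∧ w.length = n * (n - 1) / 2 ∧ HasClique w n (K n)}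

/-- The language of graphs (on `n ≥ n₀` vertices) that are `L(n)`-colorable. -/
def ColorLang (n₀ : ℕ) (L : ℕ → ℕ) : Set (List Bool) :=
  {w | ∃ n, n₀ ≤ n ∧ w.length = n * (n - 1) / 2 ∧ HasColoring w n (L n)}

/-! ## Substitutions used for the intuitionistic translations -/

/-- The substitution replacing `pᵢ` (`i < m`) by `¬pᵢ`. -/
def negSubst (m : ℕ) : ℕ → PropForm :=
  fun a => if a < m then (PropForm.var a).neg else PropForm.var a

/-- The substitution replacing `pᵢ` (`i < m`) by the fresh variable `q_i := p_{m+i}`. -/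
def shiftSubst (m : ℕ) : ℕ → PropForm :=
  fun a => if a < m then PropForm.var (m + a) else PropForm.var a

/-- `⋀_{i<m} (pᵢ ∨ qᵢ)` where `qᵢ := p_{m+i}`. -/
def pairDisjConj (m : ℕ) : PropForm :=
  conjList ((List.range m).map fun i => (PropForm.var i).or (PropForm.var (m + i)))
/-! ## Auxiliary machinery for the proof -/

section IPCAux

open PropForm

/-- Derivability from a list of assumptions, on top of `IPC`. -/
inductive Deriv : List PropForm → PropForm → Prop
  | hyp {Γ : List PropForm} {φ : PropForm} : φ ∈ Γ → Deriv Γ φ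
  | ipc {Γ : List PropForm} {φ : PropForm} : IPC φ → Deriv Γ φ
  | mp {Γ : List PropForm} {φ ψ : PropForm} :
      Deriv Γ (φ.imp ψ) → Deriv Γ φ → Deriv Γ ψ

theorem ipc_id (φ : PropForm) : IPC (φ.imp φ) :=
  IPC.mp (IPC.mp (IPC.ax2 φ (φ.imp φ) φ) (IPC.ax1 φ (φ.imp φ))) (IPC.ax1 φ φ)

theorem Deriv.weaken {Γ Γ' : List PropForm} {φ : PropForm}
    (h : Deriv Γ φ) (hs : ∀ x ∈ Γ, x ∈ Γ') : Deriv Γ' φ := by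
  induction h with
  | hyp h => exact .hyp (hs _ h)
  | ipc h => exact .ipc h
  | mp _ _ ih1 ih2 => exact .mp ih1 ih2

theorem Deriv.weak {Γ : List PropForm} {φ γ : PropForm} (h : Deriv Γ φ) :
    Deriv (γ :: Γ) φ :=
  h.weaken fun _ hx => List.mem_cons_of_mem _ hx

theorem Deriv.hyp0 {Γ : List PropForm} {φ : PropForm} : Deriv (φ :: Γ) φ :=
  .hyp (List.mem_cons_self)

theorem Deriv.hyp1 {Γ : List PropForm} {φ ψ : PropForm} : Deriv (ψ :: φ :: Γ) φ :=
  .hyp (List.mem_cons_of_mem _ (List.mem_cons_self))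

theorem Deriv.intro_aux : ∀ {Δ : List PropForm} {φ : PropForm}, Deriv Δ φ →
    ∀ {γ : PropForm} {Γ : List PropForm}, Δ = γ :: Γ → Deriv Γ (γ.imp φ) := by
  intro Δ φ h
  induction h with
  | hyp hm =>
    intro γ Γ hΔ
    subst hΔ
    rcases List.mem_cons.mp hm with h | h
    · subst h; exact .ipc (ipc_id _)
    · exact .mp (.ipc (IPC.ax1 _ _)) (.hyp h)
  | ipc h =>
    intro γ Γ hΔ
    exact .mp (.ipc (IPC.ax1 _ _)) (.ipc h)
  | mp _ _ ih1 ih2 =>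
    intro γ Γ hΔ
    exact .mp (.mp (.ipc (IPC.ax2 _ _ _)) (ih1 hΔ)) (ih2 hΔ)

theorem Deriv.intro {Γ : List PropForm} {γ φ : PropForm}
    (h : Deriv (γ :: Γ) φ) : Deriv Γ (γ.imp φ) :=
  h.intro_aux rfl

theorem Deriv.toIPC {φ : PropForm} (h : Deriv [] φ) : IPC φ := by
  generalize hΓ : ([] : List PropForm) = Γ at h
  induction h with
  | hyp hm => subst hΓ; simp at hm
  | ipc h => exact h
  | mp _ _ ih1 ih2 => exact IPC.mp ih1 ih2

theorem Deriv.exf {Γ : List PropForm} {φ : PropForm} (h : Deriv Γ .fls) : Deriv Γ φ :=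
  .mp (.ipc (IPC.axFls φ)) h

theorem Deriv.andI {Γ : List PropForm} {φ ψ : PropForm}
    (h1 : Deriv Γ φ) (h2 : Deriv Γ ψ) : Deriv Γ (φ.and ψ) :=
  .mp (.mp (.ipc (IPC.axAndI _ _)) h1) h2

theorem Deriv.andL {Γ : List PropForm} {φ ψ : PropForm}
    (h : Deriv Γ (φ.and ψ)) : Deriv Γ φ :=
  .mp (.ipc (IPC.axAndL _ _)) h

theorem Deriv.andR {Γ : List PropForm} {φ ψ : PropForm}
    (h : Deriv Γ (φ.and ψ)) : Deriv Γ ψ :=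
  .mp (.ipc (IPC.axAndR _ _)) h

theorem Deriv.orL {Γ : List PropForm} {φ ψ : PropForm}
    (h : Deriv Γ φ) : Deriv Γ (φ.or ψ) :=
  .mp (.ipc (IPC.axOrL _ _)) h

theorem Deriv.orR {Γ : List PropForm} {φ ψ : PropForm}
    (h : Deriv Γ ψ) : Deriv Γ (φ.or ψ) :=
  .mp (.ipc (IPC.axOrR _ _)) h

theorem Deriv.orE {Γ : List PropForm} {φ ψ χ : PropForm}
    (h : Deriv Γ (φ.or ψ)) (h1 : Deriv (φ :: Γ) χ) (h2 : Deriv (ψ :: Γ) χ) :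
    Deriv Γ χ :=
  .mp (.mp (.mp (.ipc (IPC.axOrE φ ψ χ)) h1.intro) h2.intro) h

theorem Deriv.did {Γ : List PropForm} {φ : PropForm} : Deriv Γ (φ.imp φ) :=
  .ipc (ipc_id φ)

/-- From `A → B` and `¬¬A`, derive `¬¬B`. -/
theorem Deriv.nn_mp {Γ : List PropForm} {φ ψ : PropForm}
    (h : Deriv Γ (φ.imp ψ)) (hnn : Deriv Γ φ.neg.neg) : Deriv Γ ψ.neg.neg := by
  apply Deriv.intro
  have hnA : Deriv (ψ.neg :: Γ) φ.neg := by
    apply Deriv.intro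
    exact .mp Deriv.hyp1 (.mp h.weak.weak .hyp0)
  exact .mp hnn.weak hnA

/-- Triple-negation reduction. -/
theorem Deriv.triple {Γ : List PropForm} {φ : PropForm}
    (h : Deriv Γ φ.neg.neg.neg) : Deriv Γ φ.neg := by
  apply Deriv.intro
  have hnn : Deriv (φ :: Γ) φ.neg.neg := by
    apply Deriv.intro
    exact .mp .hyp0 Deriv.hyp1
  exact .mp h.weak hnn

/-- `¬¬(p ∨ ¬p)`. -/
theorem Deriv.nnem {Γ : List PropForm} (φ : PropForm) :
    Deriv Γ ((φ.or φ.neg).neg.neg) := by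
  apply Deriv.intro
  have hnp : Deriv ((φ.or φ.neg).neg :: Γ) φ.neg := by
    apply Deriv.intro
    exact .mp Deriv.hyp1 (Deriv.orL .hyp0)
  exact .mp .hyp0 (Deriv.orR hnp)

/-- From `A → ¬B` and `¬¬A`, derive `¬B`. -/
theorem Deriv.neg_of_nn_imp {Γ : List PropForm} {φ ψ : PropForm}
    (h1 : Deriv Γ (φ.imp ψ.neg)) (h2 : Deriv Γ φ.neg.neg) : Deriv Γ ψ.neg := by
  apply Deriv.intro
  have hnA : Deriv (ψ :: Γ) φ.neg := by
    apply Deriv.intro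
    exact .mp (.mp h1.weak.weak .hyp0) Deriv.hyp1
  exact .mp h2.weak hnA

/-! ### Monotone-style combinators -/

theorem Deriv.and_mono {Γ : List PropForm} {a1 a2 b1 b2 : PropForm}
    (h1 : Deriv Γ (a1.imp a2)) (h2 : Deriv Γ (b1.imp b2)) :
    Deriv Γ ((a1.and b1).imp (a2.and b2)) := by
  apply Deriv.intro
  exact Deriv.andI (.mp h1.weak (Deriv.andL .hyp0)) (.mp h2.weak (Deriv.andR .hyp0))

theorem Deriv.or_mono {Γ : List PropForm} {a1 a2 b1 b2 : PropForm}
    (h1 : Deriv Γ (a1.imp a2)) (h2 : Deriv Γ (b1.imp b2)) :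
    Deriv Γ ((a1.or b1).imp (a2.or b2)) := by
  apply Deriv.intro
  exact Deriv.orE .hyp0 (Deriv.orL (.mp h1.weak.weak .hyp0))
    (Deriv.orR (.mp h2.weak.weak .hyp0))

theorem Deriv.imp_mono {Γ : List PropForm} {a1 a2 b1 b2 : PropForm}
    (h1 : Deriv Γ (a2.imp a1)) (h2 : Deriv Γ (b1.imp b2)) :
    Deriv Γ ((a1.imp b1).imp (a2.imp b2)) := by
  apply Deriv.intro
  apply Deriv.intro
  exact .mp h2.weak.weak (.mp Deriv.hyp1 (.mp h1.weak.weak .hyp0))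

/-! ### Substitution / evaluation lemmas -/

theorem eval_subst (σ : ℕ → PropForm) (v : ℕ → Bool) :
    ∀ χ : PropForm, (χ.subst σ).eval v = χ.eval (fun a => (σ a).eval v) := by
  intro χ
  induction χ <;> simp [PropForm.subst, PropForm.eval, *]

theorem eval_congr {v w : ℕ → Bool} :
    ∀ {χ : PropForm}, (∀ a ∈ χ.vars, v a = w a) → χ.eval v = χ.eval w := by
  intro χ
  induction χ with
  | tr => intro; rfl
  | fls => intro; rfl
  | var a => intro h; exact h a (by simp [PropForm.vars])
  | and χ1 χ2 ih1 ih2 =>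
    intro h
    simp only [PropForm.eval]
    rw [ih1 (fun a ha => h a (by simp [PropForm.vars, ha])),
      ih2 (fun a ha => h a (by simp [PropForm.vars, ha]))]
  | or χ1 χ2 ih1 ih2 =>
    intro h
    simp only [PropForm.eval]
    rw [ih1 (fun a ha => h a (by simp [PropForm.vars, ha])),
      ih2 (fun a ha => h a (by simp [PropForm.vars, ha]))]
  | imp χ1 χ2 ih1 ih2 =>
    intro h
    simp only [PropForm.eval]
    rw [ih1 (fun a ha => h a (by simp [PropForm.vars, ha])),
      ih2 (fun a ha => h a (by simp [PropForm.vars, ha]))]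

/-- Monotone substitution lemma. -/
theorem mono_imp (P : Finset ℕ) (σ τ : ℕ → PropForm) (Γ : List PropForm)
    (hpos : ∀ a ∈ P, Deriv Γ ((σ a).imp (τ a)))
    (hfix : ∀ a ∉ P, σ a = τ a) :
    ∀ (χ : PropForm) (b : Bool), MonoIn P b χ →
      Deriv Γ ((χ.subst (cond b σ τ)).imp (χ.subst (cond b τ σ))) := by
  intro χ
  induction χ with
  | tr => intro b _; exact Deriv.did
  | fls => intro b _; exact Deriv.did
  | var a =>
    intro b hb
    by_cases ha : a ∈ P
    · cases b with
      | true => exact hpos a ha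
      | false =>
        simp only [MonoIn] at hb
        rcases hb with hb | hb
        · exact absurd hb (by simp)
        · exact absurd ha hb
    · cases b with
      | true =>
        show Deriv Γ ((σ a).imp (τ a))
        rw [hfix a ha]; exact Deriv.did
      | false =>
        show Deriv Γ ((τ a).imp (σ a))
        rw [hfix a ha]; exact Deriv.did
  | and χ1 χ2 ih1 ih2 =>
    intro b hb
    exact Deriv.and_mono (ih1 b hb.1) (ih2 b hb.2)
  | or χ1 χ2 ih1 ih2 =>
    intro b hb
    exact Deriv.or_mono (ih1 b hb.1) (ih2 b hb.2)
  | imp χ1 χ2 ih1 ih2 =>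
    intro b hb
    have h1 := ih1 (!b) hb.1
    have h2 := ih2 b hb.2
    cases b with
    | true => exact Deriv.imp_mono h1 h2
    | false => exact Deriv.imp_mono h1 h2

/-- Substitution congruence: pointwise interderivable substitutions give
interderivable substitution instances. -/
theorem subst_iff (σ τ : ℕ → PropForm) (Γ : List PropForm)
    (h1 : ∀ a, Deriv Γ ((σ a).imp (τ a)))
    (h2 : ∀ a, Deriv Γ ((τ a).imp (σ a))) :
    ∀ χ : PropForm,
      Deriv Γ ((χ.subst σ).imp (χ.subst τ)) ∧
      Deriv Γ ((χ.subst τ).imp (χ.subst σ)) := by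
  intro χ
  induction χ with
  | tr => exact ⟨Deriv.did, Deriv.did⟩
  | fls => exact ⟨Deriv.did, Deriv.did⟩
  | var a => exact ⟨h1 a, h2 a⟩
  | and χ1 χ2 ih1 ih2 =>
    exact ⟨Deriv.and_mono ih1.1 ih2.1, Deriv.and_mono ih1.2 ih2.2⟩
  | or χ1 χ2 ih1 ih2 =>
    exact ⟨Deriv.or_mono ih1.1 ih2.1, Deriv.or_mono ih1.2 ih2.2⟩
  | imp χ1 χ2 ih1 ih2 =>
    exact ⟨Deriv.imp_mono ih1.2 ih2.1, Deriv.imp_mono ih1.1 ih2.2⟩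

/-! ### Glivenko's theorem -/

/-- The literal of variable `a` under valuation `v`. -/
def litOf (v : ℕ → Bool) (a : ℕ) : PropForm :=
  if v a then .var a else (PropForm.var a).neg

/-- The literal assumptions of a valuation on a list of variables. -/
def hypsOf (v : ℕ → Bool) (L : List ℕ) : List PropForm := L.map (litOf v)

theorem hypsOf_congr {v w : ℕ → Bool} {L : List ℕ}
    (h : ∀ a ∈ L, v a = w a) : hypsOf v L = hypsOf w L :=
  List.map_congr_left fun a ha => by simp [litOf, h a ha]

/-- Under complete literal assumptions, every formula is decided. -/
theorem decided (v : ℕ → Bool) (L : List ℕ) :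
    ∀ χ : PropForm, (∀ a ∈ χ.vars, a ∈ L) →
      Deriv (hypsOf v L) (if χ.eval v = true then χ else χ.neg) := by
  intro χ
  induction χ with
  | tr => intro _; rw [show PropForm.tr.eval v = true from rfl, if_pos rfl]; exact .ipc IPC.axTr
  | fls =>
    intro _
    rw [show PropForm.fls.eval v = false from rfl, if_neg Bool.false_ne_true]
    exact Deriv.intro .hyp0
  | var a =>
    intro h
    have ha : a ∈ L := h a (by simp [PropForm.vars])
    have hm : litOf v a ∈ hypsOf v L := List.mem_map_of_mem ha
    cases hva : v a with
    | true =>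
      rw [show (PropForm.var a).eval v = v a from rfl, hva, if_pos rfl]
      exact Deriv.hyp (by simpa [litOf, hva] using hm)
    | false =>
      rw [show (PropForm.var a).eval v = v a from rfl, hva, if_neg Bool.false_ne_true]
      exact Deriv.hyp (by simpa [litOf, hva] using hm)
  | and χ1 χ2 ih1 ih2 =>
    intro h
    have h1 := ih1 (fun a ha => h a (by simp [PropForm.vars, ha]))
    have h2 := ih2 (fun a ha => h a (by simp [PropForm.vars, ha]))
    have heval : (χ1.and χ2).eval v = (χ1.eval v && χ2.eval v) := rfl
    cases e1 : χ1.eval v with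
    | true =>
      rw [e1, if_pos rfl] at h1
      cases e2 : χ2.eval v with
      | true =>
        rw [e2, if_pos rfl] at h2
        rw [heval, e1, e2, show (true && true) = true from rfl, if_pos rfl]
        exact Deriv.andI h1 h2
      | false =>
        rw [e2, if_neg Bool.false_ne_true] at h2
        rw [heval, e1, e2, show (true && false) = false from rfl,
          if_neg Bool.false_ne_true]
        apply Deriv.intro
        exact .mp h2.weak (Deriv.andR .hyp0)
    | false =>
      rw [e1, if_neg Bool.false_ne_true] at h1
      rw [heval, e1, show (false && χ2.eval v) = false from rfl,
        if_neg Bool.false_ne_true]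
      apply Deriv.intro
      exact .mp h1.weak (Deriv.andL .hyp0)
  | or χ1 χ2 ih1 ih2 =>
    intro h
    have h1 := ih1 (fun a ha => h a (by simp [PropForm.vars, ha]))
    have h2 := ih2 (fun a ha => h a (by simp [PropForm.vars, ha]))
    have heval : (χ1.or χ2).eval v = (χ1.eval v || χ2.eval v) := rfl
    cases e1 : χ1.eval v with
    | true =>
      rw [e1, if_pos rfl] at h1
      rw [heval, e1, show (true || χ2.eval v) = true from rfl, if_pos rfl]
      exact Deriv.orL h1
    | false =>
      rw [e1, if_neg Bool.false_ne_true] at h1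
      cases e2 : χ2.eval v with
      | true =>
        rw [e2, if_pos rfl] at h2
        rw [heval, e1, e2, show (false || true) = true from rfl, if_pos rfl]
        exact Deriv.orR h2
      | false =>
        rw [e2, if_neg Bool.false_ne_true] at h2
        rw [heval, e1, e2, show (false || false) = false from rfl,
          if_neg Bool.false_ne_true]
        apply Deriv.intro
        apply Deriv.orE .hyp0
        · exact .mp h1.weak.weak .hyp0
        · exact .mp h2.weak.weak .hyp0
  | imp χ1 χ2 ih1 ih2 =>
    intro h
    have h1 := ih1 (fun a ha => h a (by simp [PropForm.vars, ha]))
    have h2 := ih2 (fun a ha => h a (by simp [PropForm.vars, ha]))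
    have heval : (χ1.imp χ2).eval v = (!(χ1.eval v) || χ2.eval v) := rfl
    cases e1 : χ1.eval v with
    | false =>
      rw [e1, if_neg Bool.false_ne_true] at h1
      rw [heval, e1, show (!false || χ2.eval v) = true from rfl, if_pos rfl]
      apply Deriv.intro
      exact Deriv.exf (.mp h1.weak .hyp0)
    | true =>
      rw [e1, if_pos rfl] at h1
      cases e2 : χ2.eval v with
      | true =>
        rw [e2, if_pos rfl] at h2
        rw [heval, e1, e2, show (!true || true) = true from rfl, if_pos rfl]
        exact Deriv.intro h2.weak
      | false =>
        rw [e2, if_neg Bool.false_ne_true] at h2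
        rw [heval, e1, e2, show (!true || false) = false from rfl,
          if_neg Bool.false_ne_true]
        apply Deriv.intro
        have hx2 : Deriv ((χ1.imp χ2) :: hypsOf v L) χ2 := .mp .hyp0 h1.weak
        exact .mp h2.weak hx2

/-- Peeling off literal assumptions from a derivation of a negated formula. -/
theorem peel (θ : PropForm) :
    ∀ L : List ℕ, L.Nodup → (∀ v : ℕ → Bool, Deriv (hypsOf v L) θ.neg) →
      Deriv [] θ.neg := by
  intro L
  induction L with
  | nil => intro _ h; exact h (fun _ => false)
  | cons a L' ih =>
    intro hnd h
    apply ih (List.Nodup.of_cons hnd)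
    intro v
    have haL' : a ∉ L' := by
      intro hmem; exact (List.nodup_cons.mp hnd).1 hmem
    have key : ∀ b : Bool,
        Deriv (litOf (Function.update v a b) a :: hypsOf v L') θ.neg := by
      intro b
      have hkey := h (Function.update v a b)
      have hcong : hypsOf (Function.update v a b) L' = hypsOf v L' := by
        apply hypsOf_congr
        intro x hx
        exact Function.update_of_ne (by rintro rfl; exact haL' hx) _ _
      rw [show hypsOf (Function.update v a b) (a :: L') =
        litOf (Function.update v a b) a :: hypsOf (Function.update v a b) L' from rfl,
        hcong] at hkey
      exact hkey
    have htrue : Deriv (PropForm.var a :: hypsOf v L') θ.neg := by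
      have := key true
      simpa [litOf, Function.update_self] using this
    have hfalse : Deriv ((PropForm.var a).neg :: hypsOf v L') θ.neg := by
      have := key false
      simpa [litOf, Function.update_self] using this
    have himp : Deriv (hypsOf v L')
        (((PropForm.var a).or (PropForm.var a).neg).imp θ.neg) := by
      apply Deriv.intro
      apply Deriv.orE .hyp0
      · exact htrue.weaken (by
          intro x hx
          rcases List.mem_cons.mp hx with h | h
          · simp [h]
          · simp [h])
      · exact hfalse.weaken (by
          intro x hx
          rcases List.mem_cons.mp hx with h | h
          · simp [h]
          · simp [h])
    exact Deriv.neg_of_nn_imp himp (Deriv.nnem _)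

/-- Glivenko's theorem. -/
theorem glivenko {θ : PropForm} (ht : θ.Taut) (Γ : List PropForm) :
    Deriv Γ θ.neg.neg := by
  have h0 : Deriv [] θ.neg.neg := by
    apply peel θ.neg θ.vars.toList (Finset.nodup_toList _)
    intro v
    have hd := decided v θ.vars.toList θ (fun a ha => Finset.mem_toList.mpr ha)
    rw [ht v, if_pos rfl] at hd
    apply Deriv.intro
    exact .mp .hyp0 hd.weak
  exact h0.weaken (by simp)

/-- Extracting a conjunct from a list conjunction. -/
theorem conj_elim {Γ : List PropForm} :
    ∀ {L : List PropForm} {x : PropForm}, x ∈ L → Deriv Γ (conjList L) →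
      Deriv Γ x := by
  intro L
  induction L with
  | nil => intro x hx; simp at hx
  | cons y L' ih =>
    intro x hx h
    have h' : Deriv Γ (y.and (conjList L')) := h
    rcases List.mem_cons.mp hx with h1 | h1
    · subst h1; exact h'.andL
    · exact ih h1 h'.andR

end IPCAux

section MainAux

/-- The case-`I` substitution: variables known to be in `Γ` go to `⊥`,
other `p`-variables stay negated. -/
def sigI (m : ℕ) (Γ : List PropForm) : ℕ → PropForm := fun a =>
  if a < m then (if PropForm.var a ∈ Γ then .fls else (PropForm.var a).neg)
  else .var a

/-- The constant substitution determined by a Boolean pattern on `p`-variables. -/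
def tauOf (m : ℕ) (b : ℕ → Bool) : ℕ → PropForm := fun a =>
  if a < m then (if b a then .tr else .fls) else .var a

theorem caseI (m : ℕ) (φ ψ : PropForm)
    (hshared : φ.vars ∩ ψ.vars ⊆ Finset.range m)
    (hmono : MonoIn (Finset.range m) true ψ)
    (htaut : (φ.imp ψ).Taut)
    (Γ : List PropForm)
    (hp : ∀ i, i < m → (PropForm.var i ∈ Γ ∨ PropForm.var (m + i) ∈ Γ)) :
    Deriv Γ (((φ.subst (negSubst m)).neg).or ((ψ.subst (shiftSubst m)).neg.neg)) := by
  classical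
  by_cases hsat : ∃ v, (φ.subst (sigI m Γ)).eval v = true
  · -- satisfiable case: derive the right disjunct
    obtain ⟨v, hv⟩ := hsat
    have hφeq : φ.eval (fun a => (sigI m Γ a).eval v) = true := by
      rw [eval_subst] at hv; exact hv
    set vstar : ℕ → Bool := fun a => (sigI m Γ a).eval v with hvstar
    have htψ : (ψ.subst (tauOf m vstar)).Taut := by
      intro w
      rw [eval_subst]
      set x : ℕ → Bool := fun a =>
        if a < m then vstar a else if a ∈ φ.vars then v a else w a with hx
      have hφx : φ.eval x = true := by
        rw [eval_congr (w := vstar) ?_]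
        · exact hφeq
        · intro a ha
          by_cases ham : a < m
          · simp [hx, ham]
          · simp [hx, ham, ha, hvstar, sigI, PropForm.eval]
      have hψx : ψ.eval x = true := by
        have := htaut x
        simp only [PropForm.eval, Bool.or_eq_true, Bool.not_eq_true'] at this
        rcases this with h | h
        · rw [hφx] at h; exact absurd h (by simp)
        · exact h
      rw [eval_congr (w := x) ?_]
      · exact hψx
      · intro a ha
        by_cases ham : a < m
        · simp only [tauOf, if_pos ham, hx]
          cases vstar a <;> simp [PropForm.eval]
        · have hnφ : a ∉ φ.vars := by
            intro hain
            have := hshared (Finset.mem_inter.mpr ⟨hain, ha⟩)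
            rw [Finset.mem_range] at this
            exact ham this
          simp [tauOf, ham, hx, hnφ, PropForm.eval]
    have hg : Deriv Γ (ψ.subst (tauOf m vstar)).neg.neg := glivenko htψ Γ
    have hmonoD : Deriv Γ
        ((ψ.subst (tauOf m vstar)).imp (ψ.subst (shiftSubst m))) := by
      have hpos : ∀ a ∈ Finset.range m,
          Deriv Γ ((tauOf m vstar a).imp (shiftSubst m a)) := by
        intro a ha
        rw [Finset.mem_range] at ha
        cases hva : vstar a with
        | false =>
          rw [show tauOf m vstar a = .fls from by simp [tauOf, ha, hva],
            show shiftSubst m a = .var (m + a) from by simp [shiftSubst, ha]]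
          exact Deriv.intro (Deriv.exf .hyp0)
        | true =>
          have hnin : PropForm.var a ∉ Γ := by
            intro hin
            have hs : sigI m Γ a = .fls := by simp [sigI, ha, hin]
            rw [hvstar] at hva
            simp only [hs, PropForm.eval] at hva
            exact absurd hva (by simp)
          have hq : PropForm.var (m + a) ∈ Γ := (hp a ha).resolve_left hnin
          rw [show tauOf m vstar a = .tr from by simp [tauOf, ha, hva],
            show shiftSubst m a = .var (m + a) from by simp [shiftSubst, ha]]
          exact Deriv.intro ((Deriv.hyp hq).weak)
      have hfix : ∀ a ∉ Finset.range m, tauOf m vstar a = shiftSubst m a := by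
        intro a ha
        rw [Finset.mem_range] at ha
        simp [tauOf, shiftSubst, ha]
      have := mono_imp (Finset.range m) (tauOf m vstar) (shiftSubst m) Γ
        hpos hfix ψ true hmono
      simpa using this
    exact Deriv.orR (Deriv.nn_mp hmonoD hg)
  · -- unsatisfiable case: derive the left disjunct
    push_neg at hsat
    have htA : (φ.subst (sigI m Γ)).neg.Taut := by
      intro v
      have := hsat v
      simp only [PropForm.neg, PropForm.eval, Bool.or_false, Bool.not_eq_true'] at *
      simp [Bool.not_eq_true] at this ⊢
      exact this
    have hnA : Deriv Γ (φ.subst (sigI m Γ)).neg := Deriv.triple (glivenko htA Γ)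
    have hcong : Deriv Γ ((φ.subst (negSubst m)).imp (φ.subst (sigI m Γ))) := by
      refine (subst_iff (negSubst m) (sigI m Γ) Γ ?_ ?_ φ).1
      · intro a
        by_cases ham : a < m
        · by_cases hin : PropForm.var a ∈ Γ
          · rw [show negSubst m a = (PropForm.var a).neg from by simp [negSubst, ham],
              show sigI m Γ a = .fls from by simp [sigI, ham, hin]]
            exact Deriv.intro (.mp .hyp0 ((Deriv.hyp hin).weak))
          · rw [show negSubst m a = (PropForm.var a).neg from by simp [negSubst, ham],
              show sigI m Γ a = (PropForm.var a).neg from by simp [sigI, ham, hin]]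
            exact Deriv.did
        · rw [show negSubst m a = .var a from by simp [negSubst, ham],
            show sigI m Γ a = .var a from by simp [sigI, ham]]
          exact Deriv.did
      · intro a
        by_cases ham : a < m
        · by_cases hin : PropForm.var a ∈ Γ
          · rw [show negSubst m a = (PropForm.var a).neg from by simp [negSubst, ham],
              show sigI m Γ a = .fls from by simp [sigI, ham, hin]]
            exact Deriv.intro (Deriv.exf .hyp0)
          · rw [show negSubst m a = (PropForm.var a).neg from by simp [negSubst, ham],
              show sigI m Γ a = (PropForm.var a).neg from by simp [sigI, ham, hin]]
            exact Deriv.did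
        · rw [show negSubst m a = .var a from by simp [negSubst, ham],
            show sigI m Γ a = .var a from by simp [sigI, ham]]
          exact Deriv.did
    exact Deriv.orL (Deriv.intro (.mp hnA.weak (.mp hcong.weak .hyp0)))

end MainAux

/-- If `CPC ⊢ φ(p,r) → ψ(p,s)` and `ψ` is monotone in the
variables `p = p₀,…,p_{m-1}`, then, with fresh variables `qᵢ := p_{m+i}`,
`IPC ⊢ ⋀ᵢ(pᵢ ∨ qᵢ) → (¬φ(¬p,r) ∨ ¬¬ψ(q,s))`. -/
theorem CPC_to_IPC_monotone_translation (m : ℕ) (φ ψ : PropForm)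
    (hshared : φ.vars ∩ ψ.vars ⊆ Finset.range m)
    (hfresh : ∀ a ∈ φ.vars ∪ ψ.vars, a < m ∨ 2 * m ≤ a)
    (hmono : MonoIn (Finset.range m) true ψ)
    (htaut : (φ.imp ψ).Taut) :
    IPC ((pairDisjConj m).imp
      (((φ.subst (negSubst m)).neg).or ((ψ.subst (shiftSubst m)).neg.neg))) := by
  have step : ∀ j k : ℕ, m - k ≤ j → ∀ Γ : List PropForm,
      (∀ i, i < k → (PropForm.var i ∈ Γ ∨ PropForm.var (m + i) ∈ Γ)) →
      (∀ i, k ≤ i → i < m → Deriv Γ ((PropForm.var i).or (PropForm.var (m + i)))) →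
      Deriv Γ (((φ.subst (negSubst m)).neg).or ((ψ.subst (shiftSubst m)).neg.neg)) := by
    intro j
    induction j with
    | zero =>
      intro k hk Γ h1 h2
      apply caseI m φ ψ hshared hmono htaut Γ
      intro i hi
      exact h1 i (by omega)
    | succ j ih =>
      intro k hk Γ h1 h2
      by_cases hkm : k < m
      · apply Deriv.orE (h2 k (le_refl k) hkm)
        · apply ih (k + 1) (by omega)
          · intro i hi
            by_cases hik : i < k
            · rcases h1 i hik with h | h
              · exact Or.inl (List.mem_cons_of_mem _ h)
              · exact Or.inr (List.mem_cons_of_mem _ h)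
            · have hieq : i = k := by omega
              subst hieq
              exact Or.inl (List.mem_cons_self)
          · intro i hi him
            exact (h2 i (by omega) him).weak
        · apply ih (k + 1) (by omega)
          · intro i hi
            by_cases hik : i < k
            · rcases h1 i hik with h | h
              · exact Or.inl (List.mem_cons_of_mem _ h)
              · exact Or.inr (List.mem_cons_of_mem _ h)
            · have hieq : i = k := by omega
              subst hieq
              exact Or.inr (List.mem_cons_self)
          · intro i hi him
            exact (h2 i (by omega) him).weak
      · apply caseI m φ ψ hshared hmono htaut Γ
        intro i hi
        exact h1 i (by omega)
  have hD : ∀ i, i < m →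
      Deriv [pairDisjConj m] ((PropForm.var i).or (PropForm.var (m + i))) := by
    intro i hi
    apply conj_elim
      (L := (List.range m).map fun i => (PropForm.var i).or (PropForm.var (m + i)))
    · exact List.mem_map.mpr ⟨i, List.mem_range.mpr hi, rfl⟩
    · exact Deriv.hyp0
  exact (Deriv.intro (step m 0 (by omega) [pairDisjConj m]
    (fun i hi => absurd hi (by omega)) (fun i _ hi => hD i hi))).toIPC
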